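/- Let q be a prime power, let k ≤ n, let s_1, s_2 ≥ 1 with s_1 + s_2 = k, and let G = [I_k | P] ∈ F_q^{k×n} be a systematic matrix in which every k columns are linearly independent (a systematic [n,k] MDS code). Then for each i ∈ {1,2}: α_{F_i}(s) = 0 for s < s_i; α_{F_i}(s) = C(n−s_i, s−s_i) for s_i ≤ s ≤ k−1; and α_{F_i}(s) = C(n,s) for s ≥ k. -/

import Mathlib

open Finset

/-- The `r`-th harmonic number `H_r = ∑_{i=1}^r 1/i`, as a real number (`H_0 = 0`). -/
noncomputable def harm (r : ℕ) : ℝ := ∑ i ∈ Finset.range r, (1 : ℝ) / (i + 1)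

/-- The span of the columns of `G` indexed by the subset `S ⊆ {1,…,n}`. -/
noncomputable def colSpan (F : Type*) [Field F] {k n : ℕ}
    (G : Matrix (Fin k) (Fin n) F) (S : Finset (Fin n)) : Submodule F (Fin k → F) :=
  Submodule.span F ((fun j => fun i => G i j) '' (S : Set (Fin n)))

/-- `α_V(s)`: the number of `s`-element subsets `S ⊆ {1,…,n}` whose columns span a
subspace containing the target subspace `V`. -/
noncomputable def alphaCount (F : Type*) [Field F] {k n : ℕ}
    (G : Matrix (Fin k) (Fin n) F) (V : Submodule F (Fin k → F)) (s : ℕ) : ℕ :=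
  Nat.card {S : Finset (Fin n) // S.card = s ∧ V ≤ colSpan F G S}

/-- The first file subspace `F₁ = span(e_1, …, e_{s₁}) ⊆ F_q^k`. -/
noncomputable def file1 (F : Type*) [Field F] (k s1 : ℕ) : Submodule F (Fin k → F) :=
  Submodule.span F {v : Fin k → F | ∃ i : Fin k, (i : ℕ) < s1 ∧ v = Pi.single i 1}

/-- The second file subspace `F₂ = span(e_{s₁+1}, …, e_k) ⊆ F_q^k`. -/
noncomputable def file2 (F : Type*) [Field F] (k s1 : ℕ) : Submodule F (Fin k → F) :=
  Submodule.span F {v : Fin k → F | ∃ i : Fin k, s1 ≤ (i : ℕ) ∧ v = Pi.single i 1}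

/-- The expected retrieval time `E(G, V) = n·H_n − ∑_{s=1}^{n−1} α_V(s)/C(n−1,s)`. -/
noncomputable def Etime (F : Type*) [Field F] {k n : ℕ}
    (G : Matrix (Fin k) (Fin n) F) (V : Submodule F (Fin k → F)) : ℝ :=
  (n : ℝ) * harm n -
    ∑ s ∈ Finset.Icc 1 (n - 1), (alphaCount F G V s : ℝ) / ((n - 1).choose s : ℝ)

section Aux
variable {F : Type*} [Field F] {k n : ℕ} (G : Matrix (Fin k) (Fin n) F)

lemma colSpan_mono {S T : Finset (Fin n)} (h : S ⊆ T) : colSpan F G S ≤ colSpan F G T :=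
  Submodule.span_mono (Set.image_mono (by exact_mod_cast h))

lemma indep_of_card_le (hkn : k ≤ n)
    (hMDS : ∀ S : Finset (Fin n), S.card = k →
      LinearIndependent F (fun j : {x : Fin n // x ∈ S} => fun i => G i j.1))
    {S : Finset (Fin n)} (hS : S.card ≤ k) :
    LinearIndependent F (fun j : {x : Fin n // x ∈ S} => fun i => G i j.1) := by
  obtain ⟨T, hST, -, hT⟩ := Finset.exists_subsuperset_card_eq S.subset_univ hS
    (by simpa using hkn)
  exact (hMDS T hT).comp (fun x : {x // x ∈ S} => (⟨x.1, hST x.2⟩ : {x // x ∈ T}))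
    (fun a b hab => by have h := congrArg Subtype.val hab; exact Subtype.ext h)

lemma col_not_mem (hkn : k ≤ n)
    (hMDS : ∀ S : Finset (Fin n), S.card = k →
      LinearIndependent F (fun j : {x : Fin n // x ∈ S} => fun i => G i j.1))
    {S : Finset (Fin n)} (hS : S.card < k) {j : Fin n} (hj : j ∉ S) :
    (fun i => G i j) ∉ colSpan F G S := by
  classical
  have hcard : (insert j S).card ≤ k := by
    rw [Finset.card_insert_of_notMem hj]; omega
  have hind := indep_of_card_le G hkn hMDS hcard
  have h2 := hind.notMem_span_image (s := {y : {x : Fin n // x ∈ insert j S} | y.1 ∈ S})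
    (x := ⟨j, Finset.mem_insert_self j S⟩) (by simp [hj])
  intro hmem
  apply h2
  have himg : (fun y : {x : Fin n // x ∈ insert j S} => fun i => G i y.1) ''
      {y : {x : Fin n // x ∈ insert j S} | y.1 ∈ S}
      = (fun j => fun i => G i j) '' (S : Set (Fin n)) := by
    ext v; constructor
    · rintro ⟨⟨y, hy⟩, hyS, rfl⟩; exact ⟨y, hyS, rfl⟩
    · rintro ⟨y, hyS, rfl⟩; exact ⟨⟨y, Finset.mem_insert_of_mem hyS⟩, hyS, rfl⟩
  rw [himg]; exact hmem

lemma colSpan_top (hkn : k ≤ n)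
    (hMDS : ∀ S : Finset (Fin n), S.card = k →
      LinearIndependent F (fun j : {x : Fin n // x ∈ S} => fun i => G i j.1))
    {S : Finset (Fin n)} (hS : k ≤ S.card) : colSpan F G S = ⊤ := by
  obtain ⟨T, hTS, hT⟩ := Finset.exists_subset_card_eq hS
  have hind := hMDS T hT
  have hcard : Fintype.card {x : Fin n // x ∈ T} = Module.finrank F (Fin k → F) := by
    simp [Module.finrank_fintype_fun_eq_card, hT]
  have htop := hind.span_eq_top_of_card_eq_finrank' hcard
  have hrange : Set.range (fun j : {x : Fin n // x ∈ T} => fun i => G i j.1)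
      = (fun j => fun i => G i j) '' (T : Set (Fin n)) := by
    ext v; constructor
    · rintro ⟨⟨y, hy⟩, rfl⟩; exact ⟨y, hy, rfl⟩
    · rintro ⟨y, hy, rfl⟩; exact ⟨⟨y, hy⟩, rfl⟩
  have : colSpan F G T = ⊤ := by rw [colSpan, ← hrange, htop]
  exact top_le_iff.mp (this ▸ colSpan_mono G hTS)

lemma col_eq_single (hsys : ∀ (i : Fin k) (j : Fin n), (j : ℕ) < k →
      G i j = if (i : ℕ) = (j : ℕ) then 1 else 0)
    {j : Fin n} (hj : (j : ℕ) < k) (i : Fin k) (hij : (i : ℕ) = (j : ℕ)) :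
    (fun i' => G i' j) = Pi.single i 1 := by
  funext i'
  rw [hsys i' j hj, Pi.single_apply]
  by_cases h : i' = i
  · subst h; simp [hij]
  · have hne : (i' : ℕ) ≠ (j : ℕ) := by
      rw [← hij]; exact fun hc => h (Fin.ext hc)
    simp [h, hne]

lemma key_iff (hkn : k ≤ n)
    (hsys : ∀ (i : Fin k) (j : Fin n), (j : ℕ) < k →
      G i j = if (i : ℕ) = (j : ℕ) then 1 else 0)
    (hMDS : ∀ S : Finset (Fin n), S.card = k →
      LinearIndependent F (fun j : {x : Fin n // x ∈ S} => fun i => G i j.1))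
    (p : ℕ → Prop) {S : Finset (Fin n)} (hS : S.card < k) :
    Submodule.span F {v : Fin k → F | ∃ i : Fin k, p (i : ℕ) ∧ v = Pi.single i 1} ≤
        colSpan F G S
      ↔ ∀ j : Fin n, (j : ℕ) < k → p (j : ℕ) → j ∈ S := by
  constructor
  · intro hle j hjk hpj
    by_contra hjS
    apply col_not_mem G hkn hMDS hS hjS
    have : Pi.single (⟨(j : ℕ), hjk⟩ : Fin k) (1 : F) ∈ colSpan F G S :=
      hle (Submodule.subset_span ⟨⟨(j : ℕ), hjk⟩, hpj, rfl⟩)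
    rwa [col_eq_single G hsys hjk ⟨(j : ℕ), hjk⟩ rfl]
  · intro hmem
    rw [Submodule.span_le]
    rintro v ⟨i, hpi, rfl⟩
    have hik : (i : ℕ) < n := lt_of_lt_of_le i.2 hkn
    set j : Fin n := ⟨(i : ℕ), hik⟩
    have hjS : j ∈ S := hmem j i.2 hpi
    have : (fun i' => G i' j) = Pi.single i 1 := col_eq_single G hsys i.2 i rfl
    rw [← this]
    exact Submodule.subset_span ⟨j, hjS, rfl⟩

end Aux

section Count
variable {α : Type*} [Fintype α] [DecidableEq α]

lemma count_card_eq (s : ℕ) :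
    (univ.filter fun S : Finset α => S.card = s).card = (Fintype.card α).choose s := by
  have h : univ.filter (fun S : Finset α => S.card = s) = Finset.powersetCard s univ := by
    ext S; simp [Finset.mem_powersetCard]
  rw [h, Finset.card_powersetCard, Finset.card_univ]

lemma count_supersets (t : Finset α) (s : ℕ) (hts : t.card ≤ s) :
    (univ.filter fun S : Finset α => S.card = s ∧ t ⊆ S).card
      = (Fintype.card α - t.card).choose (s - t.card) := by
  have h : ((Finset.powersetCard (s - t.card) tᶜ)).card
      = (Fintype.card α - t.card).choose (s - t.card) := by
    rw [Finset.card_powersetCard, Finset.card_compl]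
  rw [← h]
  apply Finset.card_nbij' (fun S => S \ t) (fun U => U ∪ t)
  · intro S hS
    simp only [Finset.mem_coe, mem_filter, mem_univ, true_and] at hS ⊢
    rw [Finset.mem_powersetCard]
    exact ⟨Finset.sdiff_subset_sdiff (Finset.subset_univ _) (le_refl t) |>.trans
      (by rw [Finset.compl_eq_univ_sdiff]),
      by rw [Finset.card_sdiff_of_subset hS.2, hS.1]⟩
  · intro U hU
    rw [Finset.mem_coe, Finset.mem_powersetCard] at hU
    have hdisj : Disjoint U t := Finset.disjoint_left.mpr
      (fun x hxU hxt => (Finset.mem_compl.mp (hU.1 hxU)) hxt)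
    simp only [Finset.mem_coe, mem_filter, mem_univ, true_and]
    refine ⟨?_, Finset.subset_union_right⟩
    rw [Finset.card_union_of_disjoint hdisj, hU.2]; omega
  · intro S hS
    simp only [Finset.mem_coe, mem_filter, mem_univ, true_and] at hS
    exact Finset.sdiff_union_of_subset hS.2
  · intro U hU
    rw [Finset.mem_coe, Finset.mem_powersetCard] at hU
    have hdisj : Disjoint U t := Finset.disjoint_left.mpr
      (fun x hxU hxt => (Finset.mem_compl.mp (hU.1 hxU)) hxt)
    show (U ∪ t) \ t = U
    rw [Finset.union_sdiff_distrib, Finset.sdiff_eq_empty_iff_subset.mpr (le_refl t),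
      Finset.union_empty, Finset.sdiff_eq_self_of_disjoint hdisj]
end Count

lemma alphaCount_eq' {F : Type*} [Field F] {k n : ℕ} (G : Matrix (Fin k) (Fin n) F)
    (V : Submodule F (Fin k → F)) (s : ℕ)
    [DecidablePred fun S : Finset (Fin n) => S.card = s ∧ V ≤ colSpan F G S] :
    alphaCount F G V s
      = (univ.filter fun S : Finset (Fin n) => S.card = s ∧ V ≤ colSpan F G S).card := by
  rw [alphaCount, Nat.card_eq_fintype_card, Fintype.card_subtype]

lemma alpha_master {F : Type*} [Field F] {k n : ℕ} (G : Matrix (Fin k) (Fin n) F)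
    (hkn : k ≤ n)
    (hsys : ∀ (i : Fin k) (j : Fin n), (j : ℕ) < k →
      G i j = if (i : ℕ) = (j : ℕ) then 1 else 0)
    (hMDS : ∀ S : Finset (Fin n), S.card = k →
      LinearIndependent F (fun j : {x : Fin n // x ∈ S} => fun i => G i j.1))
    (p : ℕ → Prop) [DecidablePred p]
    (V : Submodule F (Fin k → F))
    (hV : V = Submodule.span F
      {v : Fin k → F | ∃ i : Fin k, p (i : ℕ) ∧ v = Pi.single i 1})
    (T : Finset (Fin n))
    (hT : T = univ.filter (fun j : Fin n => (j : ℕ) < k ∧ p (j : ℕ))) :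
    (∀ s : ℕ, s < T.card → alphaCount F G V s = 0) ∧
    (∀ s : ℕ, T.card ≤ s → s < k → alphaCount F G V s = (n - T.card).choose (s - T.card)) ∧
    (∀ s : ℕ, k ≤ s → alphaCount F G V s = n.choose s) := by
  classical
  have hTk : T.card ≤ k := by
    have hsub : T ⊆ (Finset.range k).attachFin
        (fun m hm => lt_of_lt_of_le (Finset.mem_range.mp hm) hkn) := by
      intro j hj
      rw [hT, mem_filter] at hj
      rw [Finset.mem_attachFin, Finset.mem_range]
      exact hj.2.1
    calc T.card ≤ _ := Finset.card_le_card hsub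
      _ = k := by rw [Finset.card_attachFin, Finset.card_range]
  -- characterization for small s
  have hchar : ∀ S : Finset (Fin n), S.card < k →
      ((V ≤ colSpan F G S) ↔ T ⊆ S) := by
    intro S hS
    rw [hV, key_iff G hkn hsys hMDS p hS]
    constructor
    · intro h j hj
      rw [hT, mem_filter] at hj
      exact h j hj.2.1 hj.2.2
    · intro h j hjk hpj
      exact h (by rw [hT, mem_filter]; exact ⟨mem_univ j, hjk, hpj⟩)
  have hsmall : ∀ s : ℕ, s < k →
      alphaCount F G V s = (univ.filter fun S : Finset (Fin n) =>
        S.card = s ∧ T ⊆ S).card := by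
    intro s hs
    rw [alphaCount_eq']
    congr 1
    apply Finset.filter_congr
    intro S _
    constructor
    · rintro ⟨h1, h2⟩; exact ⟨h1, (hchar S (h1 ▸ hs)).mp h2⟩
    · rintro ⟨h1, h2⟩; exact ⟨h1, (hchar S (h1 ▸ hs)).mpr h2⟩
  refine ⟨?_, ?_, ?_⟩
  · intro s hs
    rw [hsmall s (lt_of_lt_of_le hs hTk)]
    rw [Finset.card_eq_zero, Finset.filter_eq_empty_iff]
    rintro S - ⟨h1, h2⟩
    have := Finset.card_le_card h2
    omega
  · intro s hs1 hs2
    rw [hsmall s hs2, count_supersets T s hs1, Fintype.card_fin]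
  · intro s hs
    rw [alphaCount_eq']
    have : (univ.filter fun S : Finset (Fin n) => S.card = s ∧ V ≤ colSpan F G S)
        = univ.filter fun S : Finset (Fin n) => S.card = s := by
      apply Finset.filter_congr
      intro S _
      constructor
      · exact fun h => h.1
      · intro h1
        refine ⟨h1, ?_⟩
        rw [colSpan_top G hkn hMDS (by omega : k ≤ S.card)]
        exact le_top
    rw [this, count_card_eq, Fintype.card_fin]
/-- Subset counts of a systematic `[n,k]` MDS code `G = [I_k | P]`:
`α_{F_i}(s) = 0` for `s < s_i`, `α_{F_i}(s) = C(n−s_i, s−s_i)` for `s_i ≤ s ≤ k−1`,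
and `α_{F_i}(s) = C(n,s)` for `s ≥ k`. -/
theorem stmt15 (q k n s1 s2 : ℕ) (hq : IsPrimePow q)
    (F : Type*) [Field F] [Fintype F] (hF : Fintype.card F = q)
    (hkn : k ≤ n) (hs1 : 1 ≤ s1) (hs2 : 1 ≤ s2) (hk : s1 + s2 = k)
    (G : Matrix (Fin k) (Fin n) F)
    (hsys : ∀ (i : Fin k) (j : Fin n), (j : ℕ) < k →
      G i j = if (i : ℕ) = (j : ℕ) then 1 else 0)
    (hMDS : ∀ S : Finset (Fin n), S.card = k →
      LinearIndependent F (fun j : {x : Fin n // x ∈ S} => fun i => G i j.1)) :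
    (∀ s : ℕ, s < s1 → alphaCount F G (file1 F k s1) s = 0) ∧
    (∀ s : ℕ, s1 ≤ s → s ≤ k - 1 →
      alphaCount F G (file1 F k s1) s = (n - s1).choose (s - s1)) ∧
    (∀ s : ℕ, k ≤ s → alphaCount F G (file1 F k s1) s = n.choose s) ∧
    (∀ s : ℕ, s < s2 → alphaCount F G (file2 F k s1) s = 0) ∧
    (∀ s : ℕ, s2 ≤ s → s ≤ k - 1 →
      alphaCount F G (file2 F k s1) s = (n - s2).choose (s - s2)) ∧
    (∀ s : ℕ, k ≤ s → alphaCount F G (file2 F k s1) s = n.choose s) := by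
  classical
  have hT1 : (univ.filter fun j : Fin n => (j : ℕ) < k ∧ (j : ℕ) < s1).card = s1 := by
    have he : (univ.filter fun j : Fin n => (j : ℕ) < k ∧ (j : ℕ) < s1)
        = (Finset.range s1).attachFin
          (fun m hm => lt_of_lt_of_le (Finset.mem_range.mp hm) (le_trans (by omega) hkn)) := by
      ext j
      simp only [mem_filter, mem_univ, true_and, Finset.mem_attachFin, Finset.mem_range]
      omega
    rw [he, Finset.card_attachFin, Finset.card_range]
  have hT2 : (univ.filter fun j : Fin n => (j : ℕ) < k ∧ s1 ≤ (j : ℕ)).card = s2 := by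
    have he : (univ.filter fun j : Fin n => (j : ℕ) < k ∧ s1 ≤ (j : ℕ))
        = (Finset.Ico s1 k).attachFin
          (fun m hm => lt_of_lt_of_le (Finset.mem_Ico.mp hm).2 hkn) := by
      ext j
      simp only [mem_filter, mem_univ, true_and, Finset.mem_attachFin, Finset.mem_Ico]
      omega
    rw [he, Finset.card_attachFin, Nat.card_Ico]
    omega
  have h1 := alpha_master G hkn hsys hMDS (fun m => m < s1) (file1 F k s1) rfl
    (univ.filter fun j : Fin n => (j : ℕ) < k ∧ (j : ℕ) < s1) rfl
  have h2 := alpha_master G hkn hsys hMDS (fun m => s1 ≤ m) (file2 F k s1) rfl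
    (univ.filter fun j : Fin n => (j : ℕ) < k ∧ s1 ≤ (j : ℕ)) rfl
  rw [hT1] at h1
  rw [hT2] at h2
  refine ⟨h1.1, fun s hs1' hs2' => ?_, h1.2.2, h2.1, fun s hs1' hs2' => ?_, h2.2.2⟩
  · exact h1.2.1 s hs1' (by omega)
  · exact h2.2.1 s hs1' (by omega)
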